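/- Let p ≥ 2 be an integer, k a field containing an element 𝕢 of multiplicative order exactly p (a primitive p-th root of unity), and K = k(q,t,z) the field of rational functions in three variables over k. For a ∈ K and b ∈ K with b ≠ 1 define the 2×2 matrix R(a,b) over K with rows ((ab−1)/(b−1), (a−1)b/(b−1)) and ((a−1)/(b−1), (ab−1)/(b−1)). Let C := (R(q, 𝕢^{p−1}z)·diag(t,t⁻¹)) · (R(q, 𝕢^{p−2}z)·diag(t,t⁻¹)) ⋯ (R(q, 𝕢 z)·diag(t,t⁻¹)) · (R(q, z)·diag(t,t⁻¹)) ∈ Mat_2(K) (the factors taken in descending order of j from p−1 to 0). Let φ : K → K be the k-algebra field embedding determined by q ↦ q^p, t ↦ t^p, z ↦ z^p. If every coefficient of the characteristic polynomial of C lies in the image of φ (the subfield k(q^p, t^p, z^p)), then the characteristic polynomial of C equals the characteristic polynomial of R(q^p, z^p)·diag(t^p, t^{−p}). (This is the isospectrality of the p-curvature of the quantum KZ connection for GL_N on the tensor product of two vector representations with the Frobenius twist R(q^p,z^p)·diag(t^p,t^{−p}); the hypothesis on the coefficients is the consequence of periodicity of this family used in the proof.) -/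

import Mathlib

open Matrix MvPolynomial

set_option maxHeartbeats 2000000
set_option synthInstance.maxHeartbeats 1000000

open Matrix MvPolynomial

section Aux

open Polynomial

variable {R : Type*} [CommRing R]

/-- Two monic polynomials of `natDegree` 2 agreeing in coefficients 0 and 1 are equal. -/
lemma monic_two_ext {f g : R[X]} (hf : f.Monic) (hg : g.Monic)
    (hfd : f.natDegree = 2) (hgd : g.natDegree = 2)
    (h0 : f.coeff 0 = g.coeff 0) (h1 : f.coeff 1 = g.coeff 1) : f = g := by
  ext n
  match n with
  | 0 => exact h0
  | 1 => exact h1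
  | 2 =>
    have hf2 := hf.coeff_natDegree
    have hg2 := hg.coeff_natDegree
    rw [hfd] at hf2; rw [hgd] at hg2; rw [hf2, hg2]
  | (n+3) =>
    rw [coeff_eq_zero_of_natDegree_lt (by omega), coeff_eq_zero_of_natDegree_lt (by omega)]

lemma lowtri_pow (M : Matrix (Fin 2) (Fin 2) R) (h : M 0 1 = 0) (n : ℕ) :
    (M ^ n) 0 1 = 0 ∧ (M ^ n) 0 0 = M 0 0 ^ n ∧ (M ^ n) 1 1 = M 1 1 ^ n := by
  induction n with
  | zero => simp [Matrix.one_apply]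
  | succ n ih =>
    obtain ⟨h1, h2, h3⟩ := ih
    rw [pow_succ, pow_succ, pow_succ]
    refine ⟨?_, ?_, ?_⟩ <;>
      simp [Matrix.mul_apply, Fin.sum_univ_two, h1, h, h2, h3]

lemma uptri_pow (M : Matrix (Fin 2) (Fin 2) R) (h : M 1 0 = 0) (n : ℕ) :
    (M ^ n) 1 0 = 0 ∧ (M ^ n) 0 0 = M 0 0 ^ n ∧ (M ^ n) 1 1 = M 1 1 ^ n := by
  induction n with
  | zero => simp [Matrix.one_apply]
  | succ n ih =>
    obtain ⟨h1, h2, h3⟩ := ih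
    rw [pow_succ, pow_succ, pow_succ]
    refine ⟨?_, ?_, ?_⟩ <;>
      simp [Matrix.mul_apply, Fin.sum_univ_two, h1, h, h2, h3]

lemma entry_deg_prod_le (l : List (Matrix (Fin 2) (Fin 2) R[X]))
    (h : ∀ M ∈ l, ∀ i j : Fin 2, (M i j).natDegree ≤ 1) (i j : Fin 2) :
    ((l.prod) i j).natDegree ≤ l.length := by
  induction l generalizing i j with
  | nil =>
    simp only [List.prod_nil, List.length_nil]
    rw [Matrix.one_apply]
    split <;> simp
  | cons M l ih =>
    rw [List.prod_cons, List.length_cons, Matrix.mul_apply]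
    refine natDegree_sum_le_of_forall_le _ _ fun x _ => ?_
    refine natDegree_mul_le.trans ?_
    have h1 := h M List.mem_cons_self i x
    have h2 := ih (fun N hN => h N (List.mem_cons_of_mem _ hN)) x j
    omega

lemma map_coeff_prod (l : List (Matrix (Fin 2) (Fin 2) R[X]))
    (h : ∀ M ∈ l, ∀ i j : Fin 2, (M i j).natDegree ≤ 1) :
    (l.prod).map (fun f => f.coeff l.length)
      = (l.map (fun M => M.map (fun f => f.coeff 1))).prod := by
  induction l with
  | nil =>
    ext i j
    simp only [List.prod_nil, List.length_nil, List.map_nil, Matrix.map_apply]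
    rw [Matrix.one_apply, Matrix.one_apply]
    split <;> simp
  | cons M l ih =>
    have hl : ∀ N ∈ l, ∀ i j : Fin 2, (N i j).natDegree ≤ 1 :=
      fun N hN => h N (List.mem_cons_of_mem _ hN)
    ext i j
    rw [List.prod_cons, List.map_cons, List.prod_cons, List.length_cons]
    rw [Matrix.map_apply, Matrix.mul_apply, finset_sum_coeff, Matrix.mul_apply]
    refine Finset.sum_congr rfl fun x _ => ?_
    have key := coeff_mul_add_eq_of_natDegree_le (h M List.mem_cons_self i x)
      (entry_deg_prod_le l hl x j)
    rw [show l.length + 1 = 1 + l.length by omega, key, ← ih hl]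
    rfl

lemma middle_vanish {F : Type*} [CommRing F] [IsDomain F] {p : ℕ}
    (T B A : F[X]) (hB : B ≠ 0) (hT : T.natDegree ≤ p)
    (h : T * Polynomial.expand F p B = Polynomial.expand F p A)
    {m : ℕ} (h0 : 0 < m) (hmp : m < p) : T.coeff m = 0 := by
  have hp : 0 < p := h0.trans hmp
  set jj := B.natDegree with hjj
  have key := congrArg (fun f => Polynomial.coeff f (m + p * jj)) h
  simp only [coeff_expand hp] at key
  have hnd : ¬ p ∣ (m + p * jj) := by
    rw [add_comm, Nat.dvd_add_right (dvd_mul_right p jj)]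
    intro hd
    have := Nat.le_of_dvd h0 hd
    omega
  rw [if_neg hnd, Polynomial.coeff_mul] at key
  rw [Finset.sum_eq_single (m, p * jj)] at key
  · have hco : (Polynomial.expand F p B).coeff (p * jj) = B.coeff jj := by
      rw [coeff_expand hp, if_pos (Dvd.intro jj rfl), Nat.mul_div_cancel_left _ hp]
    rw [hco] at key
    have hlc : B.coeff jj ≠ 0 := by
      rw [hjj]; exact mt Polynomial.leadingCoeff_eq_zero.mp hB
    exact (mul_eq_zero.mp key).resolve_right hlc
  · rintro ⟨u, v⟩ huv hne
    rw [Finset.HasAntidiagonal.mem_antidiagonal] at huv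
    simp only at huv
    by_cases hdv : p ∣ v
    · obtain ⟨w, rfl⟩ := hdv
      rw [coeff_expand hp, if_pos (Dvd.intro w rfl), Nat.mul_div_cancel_left _ hp]
      by_cases hwj : w = jj
      · exfalso
        subst hwj
        apply hne
        have hu : u = m := by omega
        rw [hu]
      · rcases lt_or_gt_of_ne hwj with hlt | hgt
        · have hmul : p * (w + 1) ≤ p * jj := Nat.mul_le_mul_left p hlt
          have hpw : p * (w + 1) = p * w + p := by ring
          have hu : T.natDegree < u := by omega
          rw [Polynomial.coeff_eq_zero_of_natDegree_lt hu, zero_mul]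
        · have hBw : B.coeff w = 0 :=
            Polynomial.coeff_eq_zero_of_natDegree_lt (by omega)
          rw [hBw, mul_zero]
    · rw [coeff_expand hp, if_neg hdv, mul_zero]
  · intro hmem
    exfalso; exact hmem (Finset.HasAntidiagonal.mem_antidiagonal.mpr rfl)

lemma list_reverse_range_prod {M : Type*} [CommMonoid M] (p : ℕ) (f : ℕ → M) :
    ((List.range p).reverse.map f).prod = ∏ j ∈ Finset.range p, f j := by
  rw [show (List.range p).reverse.map f = ((List.range p).map f).reverse from List.map_reverse.symm ▸ rfl, List.prod_reverse]
  induction p with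
  | zero => simp
  | succ n ih => rw [List.range_succ, List.map_append, List.prod_append,
      Finset.prod_range_succ, ih]; simp

lemma map_matrix_list_prod {R1 R2 : Type*} [CommRing R1] [CommRing R2] (F : R1 →+* R2)
    (l : List (Matrix (Fin 2) (Fin 2) R1)) :
    (l.prod).map ⇑F = (l.map fun M => M.map ⇑F).prod := by
  have h := map_list_prod (F.mapMatrix) l
  exact h

lemma map_matrix_list_prod_alg {R1 A B : Type*} [CommSemiring R1] [CommRing A] [CommRing B]
    [Algebra R1 A] [Algebra R1 B] (F : A →ₐ[R1] B)
    (l : List (Matrix (Fin 2) (Fin 2) A)) :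
    (l.prod).map ⇑F = (l.map fun M => M.map ⇑F).prod := by
  have h := map_list_prod ((F.toRingHom).mapMatrix) l
  exact h

lemma smul_list_prod {K : Type*} [CommRing K] (l : List ℕ) (c : ℕ → K)
    (f : ℕ → Matrix (Fin 2) (Fin 2) K) :
    (l.map fun j => c j • f j).prod = (l.map c).prod • (l.map f).prod := by
  induction l with
  | nil => simp
  | cons a l ih =>
    simp only [List.map_cons, List.prod_cons, ih]
    rw [smul_mul_smul_comm]

end Aux


/-- The R-matrix `R(a,b)` of the quantum KZ connection for two vector representations. -/
noncomputable def Rmat {K : Type} [Field K] (a b : K) : Matrix (Fin 2) (Fin 2) K :=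
  !![(a * b - 1) / (b - 1), (a - 1) * b / (b - 1);
     (a - 1) / (b - 1), (a * b - 1) / (b - 1)]

/-- Isospectrality of the `p`-curvature of the quantum KZ connection: over
`K = k(q,t,z)`, with `𝕢 ∈ k` a primitive `p`-th root of unity, let
`C = Π_{j=p−1}^{0} R(q,𝕢^j z)·diag(t,t⁻¹)`. If every coefficient of `charpoly C` lies
in the image of the embedding `φ : q ↦ q^p, t ↦ t^p, z ↦ z^p`, then
`charpoly C = charpoly (R(q^p,z^p)·diag(t^p,t^{−p}))`. -/
theorem qKZ_pcurvature_isospectral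
    {p : ℕ} (hp2 : 2 ≤ p) {k : Type} [Field k] (𝕢 : k) (h𝕢 : orderOf 𝕢 = p)
    (K : Type) [Field K] [Algebra k K]
    [Algebra (MvPolynomial (Fin 3) k) K] [IsScalarTower k (MvPolynomial (Fin 3) k) K]
    [IsFractionRing (MvPolynomial (Fin 3) k) K]
    (q t z : K)
    (hq : q = algebraMap (MvPolynomial (Fin 3) k) K (X 0))
    (ht : t = algebraMap (MvPolynomial (Fin 3) k) K (X 1))
    (hz : z = algebraMap (MvPolynomial (Fin 3) k) K (X 2))
    (C : Matrix (Fin 2) (Fin 2) K)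
    (hC : C = ((List.range p).reverse.map fun j =>
      Rmat q ((algebraMap k K 𝕢) ^ j * z) * Matrix.diagonal ![t, t⁻¹]).prod)
    (φ : K →ₐ[k] K) (hφq : φ q = q ^ p) (hφt : φ t = t ^ p) (hφz : φ z = z ^ p)
    (hcoeff : ∀ i : ℕ, C.charpoly.coeff i ∈ Set.range φ) :
    C.charpoly =
      (Rmat (q ^ p) (z ^ p) * Matrix.diagonal ![t ^ p, (t ^ p)⁻¹]).charpoly := by
  classical
  have hp0 : 0 < p := by omega
  have inj : Function.Injective (algebraMap (MvPolynomial (Fin 3) k) K) := IsFractionRing.injective _ _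
  set ζ : K := algebraMap k K 𝕢 with hζ
  -- basic facts
  have h𝕢p : 𝕢 ^ p = 1 := by rw [← h𝕢]; exact pow_orderOf_eq_one 𝕢
  have h𝕢0 : 𝕢 ≠ 0 := by
    intro h; rw [h, zero_pow (by omega)] at h𝕢p; exact one_ne_zero h𝕢p.symm
  have hCmap : ∀ c : k, algebraMap (MvPolynomial (Fin 3) k) K (MvPolynomial.C c) = algebraMap k K c := by
    intro c
    rw [← MvPolynomial.algebraMap_eq, ← IsScalarTower.algebraMap_apply]
  have halg : ∀ r : (MvPolynomial (Fin 3) k), aeval (fun i : Fin 3 => algebraMap (MvPolynomial (Fin 3) k) K (X i)) r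
      = algebraMap (MvPolynomial (Fin 3) k) K r := by
    intro r
    have h := MvPolynomial.comp_aeval (f := (X : Fin 3 → (MvPolynomial (Fin 3) k)))
      (φ := IsScalarTower.toAlgHom k (MvPolynomial (Fin 3) k) K)
    have h2 := congrArg (fun (g : (MvPolynomial (Fin 3) k) →ₐ[k] K) => g r) h
    simp only [AlgHom.comp_apply, aeval_X_left_apply, IsScalarTower.coe_toAlgHom'] at h2
    exact h2.symm
  have hAI : AlgebraicIndependent k (fun i : Fin 3 => algebraMap (MvPolynomial (Fin 3) k) K (X i)) := by
    rw [algebraicIndependent_iff_injective_aeval]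
    have hfun : ⇑(MvPolynomial.aeval (R := k) (fun i : Fin 3 => algebraMap (MvPolynomial (Fin 3) k) K (X i)))
        = ⇑(algebraMap (MvPolynomial (Fin 3) k) K) := funext halg
    rw [hfun]
    exact inj
  have ht0 : t ≠ 0 := by
    rw [ht]
    intro h
    have hX : (X 1 : (MvPolynomial (Fin 3) k)) = 0 := inj (by rw [h, map_zero])
    exact MvPolynomial.X_ne_zero _ hX
  have hζz : ∀ j : ℕ, ζ ^ j * z ≠ 1 := by
    intro j hj
    have hXj : (MvPolynomial.C (𝕢 ^ j) * X 2 : (MvPolynomial (Fin 3) k)) = 1 := by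
      apply inj
      rw [_root_.map_one, ← hj, _root_.map_mul, hCmap, map_pow, ← hz]
    have h0 := congrArg MvPolynomial.constantCoeff hXj
    rw [_root_.map_mul, _root_.map_one, MvPolynomial.constantCoeff_C,
      MvPolynomial.constantCoeff_X, mul_zero] at h0
    exact zero_ne_one h0
  have hzp : z ^ p ≠ 1 := by
    intro hj
    have hXj : (X 2 ^ p : (MvPolynomial (Fin 3) k)) = 1 := by
      apply inj
      rw [_root_.map_one, ← hj, map_pow, hz]
    have h0 := congrArg MvPolynomial.constantCoeff hXj
    rw [map_pow, _root_.map_one, MvPolynomial.constantCoeff_X, zero_pow hp0.ne'] at h0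
    exact zero_ne_one h0
  have hzp' : z ^ p - 1 ≠ 0 := sub_ne_zero.mpr hzp
  -- primitive root facts
  have hprimk : IsPrimitiveRoot 𝕢 p := h𝕢 ▸ IsPrimitiveRoot.orderOf 𝕢
  have hprim : IsPrimitiveRoot ζ p :=
    hprimk.map_of_injective (f := algebraMap k K) (algebraMap k K).injective
  have hinjOn : ∀ i ∈ Finset.range p, ∀ j ∈ Finset.range p, ζ ^ i = ζ ^ j → i = j := by
    intro i hi j hj hij
    exact hprim.pow_inj (Finset.mem_range.mp hi) (Finset.mem_range.mp hj) hij
  have hprod : ∀ x : K, (∏ j ∈ Finset.range p, (x - ζ ^ j)) = x ^ p - 1 := by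
    intro x
    have heq : Polynomial.nthRootsFinset p (1 : K) = (Finset.range p).image (ζ ^ ·) := by
      symm
      apply Finset.eq_of_subset_of_card_le
      · intro y hy
        simp only [Finset.mem_image, Finset.mem_range] at hy
        obtain ⟨j, hj, rfl⟩ := hy
        rw [Polynomial.mem_nthRootsFinset hp0, ← pow_mul, mul_comm, pow_mul,
          hprim.pow_eq_one, one_pow]
      · rw [hprim.card_nthRootsFinset, Finset.card_image_of_injOn hinjOn, Finset.card_range]
    have hpoly := Polynomial.X_pow_sub_one_eq_prod hp0 hprim
    have he := congrArg (Polynomial.eval x) hpoly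
    simp only [Polynomial.eval_sub, Polynomial.eval_pow, Polynomial.eval_X,
      Polynomial.eval_one, Polynomial.eval_prod, Polynomial.eval_C] at he
    rw [heq, Finset.prod_image hinjOn] at he
    exact he.symm
  set E : K := ∏ j ∈ Finset.range p, ζ ^ j with hEdef
  have hE : (-1 : K) ^ p * E = -1 := by
    have h := hprod 0
    simp only [zero_sub, zero_pow hp0.ne'] at h
    have h2 : (∏ j ∈ Finset.range p, -(ζ ^ j)) = (-1) ^ p * E := by
      rw [hEdef, Finset.prod_congr rfl (fun j (_ : j ∈ Finset.range p) =>
        (neg_one_mul (ζ ^ j)).symm), Finset.prod_mul_distrib, Finset.prod_const,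
        Finset.card_range]
    rw [← h2, h]
  have hE0 : E ≠ 0 := by
    intro h; rw [h, mul_zero] at hE; exact absurd hE.symm (by norm_num)
  have hmodlt : ∀ a : ℕ, (p - a) % p < p := fun a => Nat.mod_lt _ hp0
  have hinv : ∀ a, a < p → (p - (p - a) % p) % p = a := by
    intro a ha
    by_cases h0 : a = 0
    · subst h0
      simp [Nat.mod_self]
    · have h1 : (p - a) % p = p - a := Nat.mod_eq_of_lt (by omega)
      rw [h1, show p - (p - a) = a by omega, Nat.mod_eq_of_lt ha]
  have hscal : ∀ x : K, (∏ j ∈ Finset.range p, (ζ ^ j * x - 1)) = E * (x ^ p - 1) := by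
    intro x
    have key : ∀ j ∈ Finset.range p, ζ ^ j * x - 1 = ζ ^ j * (x - ζ ^ ((p - j) % p)) := by
      intro j hj
      rw [Finset.mem_range] at hj
      have hj1 : ζ ^ j * ζ ^ ((p - j) % p) = 1 := by
        rw [← pow_add]
        by_cases h0 : j = 0
        · subst h0
          simp [Nat.mod_self]
        · have h1 : (p - j) % p = p - j := Nat.mod_eq_of_lt (by omega)
          rw [h1, show j + (p - j) = p by omega, hprim.pow_eq_one]
      rw [mul_sub, hj1]
    rw [Finset.prod_congr rfl key, Finset.prod_mul_distrib, ← hEdef]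
    have hre : ∏ j ∈ Finset.range p, (x - ζ ^ ((p - j) % p))
        = ∏ j ∈ Finset.range p, (x - ζ ^ j) := by
      apply Finset.prod_nbij' (fun j => (p - j) % p) (fun j => (p - j) % p)
      · intro a ha
        exact Finset.mem_range.mpr (hmodlt a)
      · intro a ha
        exact Finset.mem_range.mpr (hmodlt a)
      · intro a ha
        exact hinv a (Finset.mem_range.mp ha)
      · intro a ha
        exact hinv a (Finset.mem_range.mp ha)
      · intro a ha
        rfl
    rw [hre, hprod]
  -- trace and det of the target matrix
  have htrT : Matrix.trace (Rmat (q ^ p) (z ^ p) * Matrix.diagonal ![t ^ p, (t ^ p)⁻¹])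
      = (q ^ p * z ^ p - 1) / (z ^ p - 1) * (t ^ p + (t ^ p)⁻¹) := by
    rw [Matrix.trace_fin_two, Matrix.mul_diagonal, Matrix.mul_diagonal]
    have e00 : Rmat (q ^ p) (z ^ p) 0 0 = (q ^ p * z ^ p - 1) / (z ^ p - 1) := rfl
    have e11 : Rmat (q ^ p) (z ^ p) 1 1 = (q ^ p * z ^ p - 1) / (z ^ p - 1) := rfl
    have d0 : (![t ^ p, (t ^ p)⁻¹] : Fin 2 → K) 0 = t ^ p := rfl
    have d1 : (![t ^ p, (t ^ p)⁻¹] : Fin 2 → K) 1 = (t ^ p)⁻¹ := rfl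
    rw [e00, e11, d0, d1]
    ring
  have hdetT : Matrix.det (Rmat (q ^ p) (z ^ p) * Matrix.diagonal ![t ^ p, (t ^ p)⁻¹])
      = (q ^ (2 * p) * z ^ p - 1) / (z ^ p - 1) := by
    rw [Matrix.det_mul, Matrix.det_diagonal, Fin.prod_univ_two]
    have d0 : (![t ^ p, (t ^ p)⁻¹] : Fin 2 → K) 0 = t ^ p := rfl
    have d1 : (![t ^ p, (t ^ p)⁻¹] : Fin 2 → K) 1 = (t ^ p)⁻¹ := rfl
    rw [d0, d1, mul_inv_cancel₀ (pow_ne_zero _ ht0), mul_one]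
    rw [show Rmat (q ^ p) (z ^ p) = !![(q ^ p * z ^ p - 1) / (z ^ p - 1),
      (q ^ p - 1) * z ^ p / (z ^ p - 1); (q ^ p - 1) / (z ^ p - 1),
      (q ^ p * z ^ p - 1) / (z ^ p - 1)] from rfl, Matrix.det_fin_two_of]
    rw [div_mul_div_comm, div_mul_div_comm, div_sub_div_same,
      div_eq_div_iff (mul_ne_zero hzp' hzp') hzp', show 2 * p = p * 2 from mul_comm 2 p, pow_mul]
    ring
  -- det of C
  have hdetC : C.det = (q ^ (2 * p) * z ^ p - 1) / (z ^ p - 1) := by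
    have h1 : ∀ (l : List (Matrix (Fin 2) (Fin 2) K)), l.prod.det = (l.map Matrix.det).prod := by
      intro l
      simpa using map_list_prod (Matrix.detMonoidHom) l
    rw [hC, h1, List.map_map]
    rw [list_reverse_range_prod]
    have hdet1 : ∀ j : ℕ, (Matrix.det ∘ fun j => Rmat q (ζ ^ j * z) * Matrix.diagonal ![t, t⁻¹]) j
        = (q ^ 2 * (ζ ^ j * z) - 1) / (ζ ^ j * z - 1) := by
      intro j
      have hb : ζ ^ j * z - 1 ≠ 0 := sub_ne_zero.mpr (hζz j)
      simp only [Function.comp_apply]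
      rw [Matrix.det_mul, Matrix.det_diagonal, Fin.prod_univ_two]
      have d0 : (![t, t⁻¹] : Fin 2 → K) 0 = t := rfl
      have d1 : (![t, t⁻¹] : Fin 2 → K) 1 = t⁻¹ := rfl
      rw [d0, d1, mul_inv_cancel₀ ht0, mul_one]
      rw [show Rmat q (ζ ^ j * z) = !![(q * (ζ ^ j * z) - 1) / (ζ ^ j * z - 1),
        (q - 1) * (ζ ^ j * z) / (ζ ^ j * z - 1); (q - 1) / (ζ ^ j * z - 1),
        (q * (ζ ^ j * z) - 1) / (ζ ^ j * z - 1)] from rfl, Matrix.det_fin_two_of]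
      rw [div_mul_div_comm, div_mul_div_comm, div_sub_div_same,
        div_eq_div_iff (mul_ne_zero hb hb) hb]
      ring
    rw [Finset.prod_congr rfl (fun j _ => hdet1 j), Finset.prod_div_distrib]
    have hnum : ∏ j ∈ Finset.range p, (q ^ 2 * (ζ ^ j * z) - 1) = E * ((q ^ 2 * z) ^ p - 1) := by
      rw [← hscal (q ^ 2 * z)]
      exact Finset.prod_congr rfl fun j _ => by ring
    rw [hnum, hscal z, mul_pow, mul_div_mul_left _ _ hE0, ← pow_mul]
  -- trace of C
  have htrC : Matrix.trace C = (q ^ p * z ^ p - 1) / (z ^ p - 1) * (t ^ p + (t ^ p)⁻¹) := by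
    have htp : (t : K) ^ p ≠ 0 := pow_ne_zero _ ht0
    -- the subalgebra generated by q and t
    set S := Algebra.adjoin k ({q, t} : Set K) with hSdef
    have hqS : q ∈ S := Algebra.subset_adjoin (by simp)
    have htS : t ∈ S := Algebra.subset_adjoin (by simp)
    set qS : S := ⟨q, hqS⟩ with hqSdef
    set tS : S := ⟨t, htS⟩ with htSdef
    set ζS : S := algebraMap k S 𝕢 with hζSdef
    have hcoeq : (qS : K) = q := rfl
    have hcoet : (tS : K) = t := rfl
    have hcoeζ : (ζS : K) = ζ := by
      rw [hζSdef, hζ]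
      exact (IsScalarTower.algebraMap_apply k S K 𝕢).symm
    -- z is transcendental over S
    have htrans : Transcendental S z := by
      have hbase : AlgebraicIndependent k ![q, t] := by
        have h := hAI.comp (fun i : Fin 2 => Fin.castSucc i) (Fin.castSucc_injective _)
        have he : ((fun i : Fin 3 => algebraMap (MvPolynomial (Fin 3) k) K (X i))
            ∘ fun i : Fin 2 => Fin.castSucc i) = ![q, t] := by
          funext i
          fin_cases i
          · simpa using hq.symm
          · simpa using ht.symm
        rwa [he] at h
      have heinj : Function.Injective
          (fun o : Option (Fin 2) => Option.elim o 2 Fin.castSucc) := by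
        rintro (_ | a) (_ | b) h <;> simp only [Option.elim] at h
        · rfl
        · exfalso; fin_cases b <;> exact absurd h (by decide)
        · exfalso; fin_cases a <;> exact absurd h (by decide)
        · exact congrArg some (Fin.castSucc_injective _ h)
      have hopt : AlgebraicIndependent k
          (fun o : Option (Fin 2) => Option.elim o z ![q, t]) := by
        have h := hAI.comp (fun o : Option (Fin 2) => Option.elim o 2 Fin.castSucc) heinj
        have he : ((fun i : Fin 3 => algebraMap (MvPolynomial (Fin 3) k) K (X i))
            ∘ fun o : Option (Fin 2) => Option.elim o 2 Fin.castSucc)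
            = fun o : Option (Fin 2) => Option.elim o z ![q, t] := by
          funext o
          rcases o with _ | i
          · simpa using hz.symm
          · simp only [Function.comp_apply, Option.elim]
            fin_cases i
            · simpa using hq.symm
            · simpa using ht.symm
        rwa [he] at h
      have h2 := (hbase.option_iff_transcendental z).mp hopt
      have hr : Set.range ![q, t] = {q, t} := by
        ext u
        simp only [Set.mem_range, Fin.exists_fin_two, Matrix.cons_val_zero,
          Matrix.cons_val_one, Matrix.head_cons, Set.mem_insert_iff, Set.mem_singleton_iff]
        tauto
      rwa [hr] at h2
    have peinj : Function.Injective (⇑(Polynomial.aeval z : Polynomial S →ₐ[S] K)) :=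
      transcendental_iff_injective.mp htrans
    set pe : Polynomial S →ₐ[S] K := Polynomial.aeval z with hpedef
    have hpeC : ∀ s : S, pe (Polynomial.C s) = (s : K) := by
      intro s
      rw [hpedef, Polynomial.aeval_C]
      rfl
    have hpeX : pe Polynomial.X = z := Polynomial.aeval_X z
    -- the polynomial matrices
    set Pm : Matrix (Fin 2) (Fin 2) S := !![-tS^2, 0; (qS-1)*tS^2, -1] with hPmdef
    set Qm : Matrix (Fin 2) (Fin 2) S := !![qS*tS^2, qS-1; 0, qS] with hQmdef
    set G : ℕ → Matrix (Fin 2) (Fin 2) (Polynomial S) := fun j =>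
      !![Polynomial.C (qS*tS^2*ζS^j) * Polynomial.X - Polynomial.C (tS^2),
         Polynomial.C ((qS-1)*ζS^j) * Polynomial.X;
         Polynomial.C ((qS-1)*tS^2),
         Polynomial.C (qS*ζS^j) * Polynomial.X - Polynomial.C 1] with hGdef
    have hdeg1 : ∀ a b : S, (Polynomial.C a * Polynomial.X - Polynomial.C b).natDegree ≤ 1 := by
      intro a b
      refine (Polynomial.natDegree_sub_le _ _).trans ?_
      rw [max_le_iff]
      constructor
      · exact (Polynomial.natDegree_C_mul_le _ _).trans Polynomial.natDegree_X_le
      · simp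
    have hGdeg : ∀ j : ℕ, ∀ i i' : Fin 2, ((G j) i i').natDegree ≤ 1 := by
      intro j i i'
      fin_cases i <;> fin_cases i'
      · exact hdeg1 _ _
      · exact (Polynomial.natDegree_C_mul_le _ _).trans Polynomial.natDegree_X_le
      · exact (Polynomial.natDegree_C _).trans_le (Nat.zero_le 1)
      · exact hdeg1 _ _
    have hldeg : ∀ M ∈ (List.range p).reverse.map G, ∀ i i' : Fin 2,
        (M i i').natDegree ≤ 1 := by
      intro M hM i i'
      obtain ⟨j, _, rfl⟩ := List.mem_map.mp hM
      exact hGdeg j i i'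
    have hlen : ((List.range p).reverse.map G).length = p := by simp
    -- evaluation of G j
    have hGev : ∀ j : ℕ, (G j).map (⇑pe)
        = ((ζ^j * z - 1) * t) • (Rmat q (ζ^j * z) * Matrix.diagonal ![t, t⁻¹]) := by
      intro j
      have hb : ζ^j * z - 1 ≠ 0 := sub_ne_zero.mpr (hζz j)
      have hRD : ∀ a b : Fin 2, (Rmat q (ζ^j * z) * Matrix.diagonal ![t, t⁻¹]) a b
          = Rmat q (ζ^j * z) a b * (![t, t⁻¹] b) := fun a b => Matrix.mul_diagonal _ _ _ _
      ext a b
      rw [Matrix.map_apply, Matrix.smul_apply, hRD, smul_eq_mul]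
      fin_cases a <;> fin_cases b
      · show pe (Polynomial.C (qS*tS^2*ζS^j) * Polynomial.X - Polynomial.C (tS^2))
          = (ζ^j*z - 1) * t * ((q * (ζ^j*z) - 1)/(ζ^j*z - 1) * t)
        rw [_root_.map_sub, _root_.map_mul, hpeC, hpeX, hpeC]
        push_cast [hcoeq, hcoet, hcoeζ]
        field_simp
      · show pe (Polynomial.C ((qS-1)*ζS^j) * Polynomial.X)
          = (ζ^j*z - 1) * t * ((q - 1) * (ζ^j*z)/(ζ^j*z - 1) * t⁻¹)
        rw [_root_.map_mul, hpeC, hpeX]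
        push_cast [hcoeq, hcoet, hcoeζ]
        field_simp
      · show pe (Polynomial.C ((qS-1)*tS^2))
          = (ζ^j*z - 1) * t * ((q - 1)/(ζ^j*z - 1) * t)
        rw [hpeC]
        push_cast [hcoeq, hcoet, hcoeζ]
        field_simp
      · show pe (Polynomial.C (qS*ζS^j) * Polynomial.X - Polynomial.C 1)
          = (ζ^j*z - 1) * t * ((q * (ζ^j*z) - 1)/(ζ^j*z - 1) * t⁻¹)
        rw [_root_.map_sub, _root_.map_mul, hpeC, hpeX, hpeC]
        push_cast [hcoeq, hcoet, hcoeζ]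
        field_simp
    -- the trace polynomial
    set BigP : Matrix (Fin 2) (Fin 2) (Polynomial S) := ((List.range p).reverse.map G).prod
      with hBigPdef
    set TP : Polynomial S := Matrix.trace BigP with hTPdef
    have hcoeff_trace : ∀ (n : ℕ) (A : Matrix (Fin 2) (Fin 2) (Polynomial S)),
        (Matrix.trace A).coeff n = Matrix.trace (A.map (fun f => f.coeff n)) := by
      intro n A
      rw [Matrix.trace_fin_two, Matrix.trace_fin_two, Polynomial.coeff_add]
      rfl
    have hTtr : pe TP = (E * (z^p - 1) * t^p) * Matrix.trace C := by
      have h1 : pe TP = Matrix.trace (BigP.map ⇑pe) := by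
        rw [hTPdef, Matrix.trace_fin_two, Matrix.trace_fin_two, _root_.map_add]
        rfl
      rw [h1, hBigPdef, map_matrix_list_prod_alg pe, List.map_map]
      have h2 : (Matrix.map · ⇑pe) ∘ G = fun j =>
          ((ζ^j * z - 1) * t) • (Rmat q (ζ^j * z) * Matrix.diagonal ![t, t⁻¹]) := by
        funext j
        exact hGev j
      rw [h2, smul_list_prod, ← hC, Matrix.trace_smul, smul_eq_mul]
      congr 1
      rw [list_reverse_range_prod, Finset.prod_mul_distrib, hscal z, Finset.prod_const,
        Finset.card_range]
    have hTdeg : TP.natDegree ≤ p := by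
      rw [hTPdef, Matrix.trace_fin_two]
      refine (Polynomial.natDegree_add_le _ _).trans ?_
      rw [max_le_iff]
      have h1 := entry_deg_prod_le _ hldeg 0 0
      have h2 := entry_deg_prod_le _ hldeg 1 1
      rw [hlen] at h1 h2
      exact ⟨h1, h2⟩
    have hpow_const : ∀ (l : List ℕ) (Mc : Matrix (Fin 2) (Fin 2) S),
        (l.map fun _ => Mc).prod = Mc ^ l.length := by
      intro l Mc
      induction l with
      | nil => simp
      | cons a l ih => rw [List.map_cons, List.prod_cons, ih, List.length_cons, pow_succ']
    have hT0 : TP.coeff 0 = (-tS^2)^p + (-1)^p := by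
      rw [hTPdef, hcoeff_trace, hBigPdef]
      have hc : (fun f : Polynomial S => f.coeff 0) = ⇑(Polynomial.constantCoeff (R := S)) := by
        funext f
        rfl
      rw [hc, map_matrix_list_prod (Polynomial.constantCoeff (R := S)), List.map_map]
      have h2 : (Matrix.map · ⇑(Polynomial.constantCoeff (R := S))) ∘ G = fun _ => Pm := by
        funext j
        refine Matrix.ext fun a b => ?_
        fin_cases a <;> fin_cases b
        · show (Polynomial.C (qS*tS^2*ζS^j) * Polynomial.X - Polynomial.C (tS^2)).coeff 0
            = -tS^2
          rw [Polynomial.coeff_sub, Polynomial.coeff_C_mul, Polynomial.coeff_X_zero,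
            mul_zero, Polynomial.coeff_C, if_pos rfl, zero_sub]
        · show (Polynomial.C ((qS-1)*ζS^j) * Polynomial.X).coeff 0 = (0 : S)
          rw [Polynomial.coeff_C_mul, Polynomial.coeff_X_zero, mul_zero]
        · show (Polynomial.C ((qS-1)*tS^2)).coeff 0 = (qS-1)*tS^2
          exact Polynomial.coeff_C_zero
        · show (Polynomial.C (qS*ζS^j) * Polynomial.X - Polynomial.C 1).coeff 0 = (-1 : S)
          rw [Polynomial.coeff_sub, Polynomial.coeff_C_mul, Polynomial.coeff_X_zero,
            mul_zero, Polynomial.coeff_C, if_pos rfl, zero_sub]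
      rw [h2, hpow_const, List.length_reverse, List.length_range]
      have hPm01 : Pm 0 1 = 0 := rfl
      obtain ⟨-, ha, hb⟩ := lowtri_pow Pm hPm01 p
      rw [Matrix.trace_fin_two, ha, hb]
      rfl
    set ES : S := ∏ j ∈ Finset.range p, ζS ^ j with hESdef
    have hEScoe : (ES : K) = E := by
      rw [hESdef, hEdef]
      push_cast [hcoeζ]
      rfl
    have hTp : TP.coeff p = ES * ((qS*tS^2)^p + qS^p) := by
      rw [hTPdef, hcoeff_trace, hBigPdef]
      have h := map_coeff_prod ((List.range p).reverse.map G) hldeg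
      rw [hlen] at h
      rw [h, List.map_map]
      have h2 : (Matrix.map · (fun f : Polynomial S => f.coeff 1)) ∘ G
          = fun j => ζS^j • Qm := by
        funext j
        refine Matrix.ext fun a b => ?_
        fin_cases a <;> fin_cases b
        · show (Polynomial.C (qS*tS^2*ζS^j) * Polynomial.X - Polynomial.C (tS^2)).coeff 1
            = ζS^j • (qS*tS^2)
          rw [smul_eq_mul, Polynomial.coeff_sub, Polynomial.coeff_C_mul,
            Polynomial.coeff_X_one, mul_one, Polynomial.coeff_C, if_neg one_ne_zero, sub_zero]
          ring
        · show (Polynomial.C ((qS-1)*ζS^j) * Polynomial.X).coeff 1 = ζS^j • (qS-1)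
          rw [smul_eq_mul, Polynomial.coeff_C_mul, Polynomial.coeff_X_one, mul_one]
          ring
        · show (Polynomial.C ((qS-1)*tS^2)).coeff 1 = ζS^j • 0
          rw [smul_eq_mul, mul_zero, Polynomial.coeff_C, if_neg one_ne_zero]
        · show (Polynomial.C (qS*ζS^j) * Polynomial.X - Polynomial.C 1).coeff 1 = ζS^j • qS
          rw [smul_eq_mul, Polynomial.coeff_sub, Polynomial.coeff_C_mul,
            Polynomial.coeff_X_one, mul_one, Polynomial.coeff_C, if_neg one_ne_zero, sub_zero]
          ring
      rw [h2, smul_list_prod, hpow_const, List.length_reverse, List.length_range,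
        list_reverse_range_prod, ← hESdef, Matrix.trace_smul, smul_eq_mul]
      have hQm10 : Qm 1 0 = 0 := rfl
      obtain ⟨-, ha, hb⟩ := uptri_pow Qm hQm10 p
      rw [Matrix.trace_fin_two, ha, hb]
      rfl
    -- the trace of C is in the image of φ
    have hφinj : Function.Injective ⇑φ := φ.toRingHom.injective
    have hcp1 : Matrix.trace C = - C.charpoly.coeff 1 := by
      have h1 := Matrix.trace_eq_neg_charpoly_coeff C
      simpa using h1
    obtain ⟨f0, hf0⟩ := hcoeff 1
    have htrφ : Matrix.trace C = φ (-f0) := by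
      rw [map_neg, hf0, ← hcp1]
    obtain ⟨a, b, hbmem, hab⟩ := IsFractionRing.div_surjective
      (A := MvPolynomial (Fin 3) k) (-f0 : K)
    have hb0 : algebraMap (MvPolynomial (Fin 3) k) K b ≠ 0 := by
      have hbne : b ≠ 0 := nonZeroDivisors.ne_zero hbmem
      intro h
      exact hbne (inj (by rw [h, map_zero]))
    set Φ₁ : MvPolynomial (Fin 3) k →ₐ[k] Polynomial S :=
      MvPolynomial.aeval ![Polynomial.C (qS^p), Polynomial.C (tS^p), Polynomial.X] with hΦ₁def
    have hhom : (φ.comp (IsScalarTower.toAlgHom k (MvPolynomial (Fin 3) k) K))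
        = ((pe.comp (Polynomial.expand S p)).restrictScalars k).comp Φ₁ := by
      apply MvPolynomial.algHom_ext
      intro i
      fin_cases i
      · show φ (algebraMap (MvPolynomial (Fin 3) k) K (X 0))
          = pe (Polynomial.expand S p (Φ₁ (X 0)))
        rw [← hq, hφq, hΦ₁def, MvPolynomial.aeval_X]
        show q ^ p = pe (Polynomial.expand S p (Polynomial.C (qS^p)))
        rw [Polynomial.expand_C, hpeC]
        push_cast [hcoeq]
        rfl
      · show φ (algebraMap (MvPolynomial (Fin 3) k) K (X 1))
          = pe (Polynomial.expand S p (Φ₁ (X 1)))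
        rw [← ht, hφt, hΦ₁def, MvPolynomial.aeval_X]
        show t ^ p = pe (Polynomial.expand S p (Polynomial.C (tS^p)))
        rw [Polynomial.expand_C, hpeC]
        push_cast [hcoet]
        rfl
      · show φ (algebraMap (MvPolynomial (Fin 3) k) K (X 2))
          = pe (Polynomial.expand S p (Φ₁ (X 2)))
        rw [← hz, hφz, hΦ₁def, MvPolynomial.aeval_X]
        show z ^ p = pe (Polynomial.expand S p Polynomial.X)
        rw [Polynomial.expand_X, _root_.map_pow, hpeX]
    have hφev : ∀ r : MvPolynomial (Fin 3) k,
        φ (algebraMap (MvPolynomial (Fin 3) k) K r) = pe (Polynomial.expand S p (Φ₁ r)) := by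
      intro r
      exact AlgHom.congr_fun hhom r
    have htr2 : Matrix.trace C
        = pe (Polynomial.expand S p (Φ₁ a)) / pe (Polynomial.expand S p (Φ₁ b)) := by
      rw [htrφ, ← hab, map_div₀, hφev, hφev]
    have hpB : pe (Polynomial.expand S p (Φ₁ b)) ≠ 0 := by
      rw [← hφev]
      intro h
      apply hb0
      apply hφinj
      rw [h, map_zero]
    have hkey : TP * Polynomial.expand S p (Φ₁ b)
        = Polynomial.C (ES * tS^p) * (Polynomial.X^p - 1) * Polynomial.expand S p (Φ₁ a) := by
      apply peinj
      rw [_root_.map_mul, _root_.map_mul, _root_.map_mul, _root_.map_sub, _root_.map_pow, _root_.map_one, hpeX, hpeC]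
      show pe TP * pe (Polynomial.expand S p (Φ₁ b)) = _
      rw [hTtr, htr2, mul_assoc, div_mul_cancel₀ _ hpB]
      push_cast [hEScoe, hcoet]
      ring
    have hexp : Polynomial.expand S p (Polynomial.C (ES * tS^p) * (Polynomial.X - 1) * Φ₁ a)
        = Polynomial.C (ES * tS^p) * (Polynomial.X^p - 1) * Polynomial.expand S p (Φ₁ a) := by
      rw [_root_.map_mul, _root_.map_mul, _root_.map_sub, _root_.map_one,
        Polynomial.expand_C, Polynomial.expand_X]
    have hkey2 : TP * Polynomial.expand S p (Φ₁ b)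
        = Polynomial.expand S p (Polynomial.C (ES * tS^p) * (Polynomial.X - 1) * Φ₁ a) :=
      hkey.trans hexp.symm
    have hΦb0 : Φ₁ b ≠ 0 := by
      intro h
      apply hpB
      rw [h, map_zero, map_zero]
    have hmid : ∀ m, 0 < m → m < p → TP.coeff m = 0 := by
      intro m h1 h2
      exact middle_vanish TP (Φ₁ b) _ hΦb0 hTdeg hkey2 h1 h2
    have hTrep : TP = Polynomial.C (TP.coeff 0) + Polynomial.C (TP.coeff p) * Polynomial.X ^ p := by
      ext n
      rw [Polynomial.coeff_add, Polynomial.coeff_C, Polynomial.coeff_C_mul,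
        Polynomial.coeff_X_pow]
      rcases Nat.lt_trichotomy n p with hn | rfl | hn
      · rcases Nat.eq_zero_or_pos n with rfl | hn0
        · rw [if_pos rfl, if_neg (by omega), mul_zero, add_zero]
        · rw [hmid n hn0 hn, if_neg (by omega), if_neg (by omega), mul_zero, add_zero]
      · rw [if_neg (by omega), if_pos rfl, mul_one, zero_add]
      · rw [Polynomial.coeff_eq_zero_of_natDegree_lt (lt_of_le_of_lt hTdeg hn),
          if_neg (by omega), if_neg (by omega), mul_zero, add_zero]
    have hfinal : (E * (z^p - 1) * t^p) * Matrix.trace C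
        = ((-(t^2))^p + (-1)^p) + (E * ((q*t^2)^p + q^p)) * z^p := by
      rw [← hTtr, hTrep, _root_.map_add, _root_.map_mul, _root_.map_pow, hpeX, hpeC, hpeC, hT0, hTp]
      push_cast [hcoeq, hcoet, hEScoe]
      ring
    have hden : E * (z^p - 1) * t^p ≠ 0 := mul_ne_zero (mul_ne_zero hE0 hzp') htp
    have htrCval : Matrix.trace C
        = (((-(t^2))^p + (-1)^p) + (E * ((q*t^2)^p + q^p)) * z^p) / (E * (z^p - 1) * t^p) := by
      rw [← hfinal]
      exact (mul_div_cancel_left₀ _ hden).symm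
    rw [htrCval, div_mul_eq_mul_div, div_eq_div_iff hden hzp']
    rcases Nat.even_or_odd p with hpar | hpar
    · have hneg1 : (-1 : K)^p = 1 := hpar.neg_one_pow
      have hEval : E = -1 := by rwa [hneg1, one_mul] at hE
      have hnt : (-(t^2) : K)^p = (t^2)^p := hpar.neg_pow _
      rw [hEval, hneg1, hnt]
      field_simp
      ring
    · have hneg1 : (-1 : K)^p = -1 := hpar.neg_one_pow
      have hEval : E = 1 := by
        have h' := hE
        rw [hneg1, neg_one_mul] at h'
        exact neg_injective h'
      have hnt : (-(t^2) : K)^p = -((t^2)^p) := hpar.neg_pow _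
      rw [hEval, hneg1, hnt]
      field_simp
      ring
  -- conclude
  have hcard : Fintype.card (Fin 2) = 2 := by simp
  apply monic_two_ext (Matrix.charpoly_monic _) (Matrix.charpoly_monic _)
  · rw [Matrix.charpoly_natDegree_eq_dim, hcard]
  · rw [Matrix.charpoly_natDegree_eq_dim, hcard]
  · have h1 := Matrix.det_eq_sign_charpoly_coeff C
    have h2 := Matrix.det_eq_sign_charpoly_coeff
      (Rmat (q ^ p) (z ^ p) * Matrix.diagonal ![t ^ p, (t ^ p)⁻¹])
    rw [hcard] at h1 h2
    have he : ((-1 : K)) ^ 2 = 1 := by norm_num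
    rw [he, one_mul] at h1 h2
    rw [← h1, ← h2, hdetC, hdetT]
  · have h1 := Matrix.trace_eq_neg_charpoly_coeff C
    have h2 := Matrix.trace_eq_neg_charpoly_coeff
      (Rmat (q ^ p) (z ^ p) * Matrix.diagonal ![t ^ p, (t ^ p)⁻¹])
    rw [hcard] at h1 h2
    norm_num at h1 h2
    rw [← neg_eq_iff_eq_neg] at h1 h2
    rw [← h1, ← h2, htrC, htrT]
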